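/- For all integers m, n: the resultant identity Res_m(t_1(m,n), t_2(m,n)) = -8n^9 holds, where t_1(m,n) = m^3+2m^2n+mn^2+n^3 and t_2(m,n) = m^3-mn^2-n^3; consequently, if gcd(m,n)=1 and p is an odd prime, p cannot divide both t_1(m,n) and t_2(m,n). -/

import Mathlib

set_option maxRecDepth 100000 in
set_option maxHeartbeats 2000000 in
theorem resultant_t1_t2 (m n : ℤ) :
    (Matrix.det !![1, 2*n, n^2, n^3, 0, 0;
                   0, 1, 2*n, n^2, n^3, 0;
                   0, 0, 1, 2*n, n^2, n^3;
                   1, 0, -n^2, -n^3, 0, 0;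
                   0, 1, 0, -n^2, -n^3, 0;
                   0, 0, 1, 0, -n^2, -n^3] = -8*n^9) ∧
    (∀ p : ℤ, Prime p → Odd p → IsCoprime m n →
      ¬ (p ∣ m^3 + 2*m^2*n + m*n^2 + n^3 ∧ p ∣ m^3 - m*n^2 - n^3)) := by
  constructor
  · simp [Matrix.det_succ_row_zero, Fin.sum_univ_succ]
    norm_num [Fin.succAbove, Fin.lt_def, Matrix.cons_val_succ, Fin.castSucc, Fin.castAdd,
      Fin.castLE]
    simp only [Matrix.cons_val]
    ring
  · rintro p hp hodd hcop ⟨h1, h2⟩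
    have hcontra : ∀ a b : ℤ, p ∣ m → p ∣ n → False := by
      intro a b hm hn
      exact hp.not_unit (hcop.isUnit_of_dvd' hm hn)
    have hq : p ∣ 2 * n * (m^2 + m*n + n^2) := by
      have := dvd_sub h1 h2
      have e : m^3 + 2*m^2*n + m*n^2 + n^3 - (m^3 - m*n^2 - n^3)
          = 2 * n * (m^2 + m*n + n^2) := by ring
      rwa [e] at this
    have hpm : p ∣ m → p ∣ n → False := fun hm hn =>
      hp.not_unit (hcop.isUnit_of_dvd' hm hn)
    have hn_to_m : p ∣ n → False := by
      intro hn
      have : p ∣ m^3 := by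
        have e : m^3 = (m^3 - m*n^2 - n^3) + n * (m*n + n^2) := by ring
        rw [e]
        exact dvd_add h2 (hn.mul_right _)
      exact hpm (hp.dvd_of_dvd_pow this) hn
    rcases hp.dvd_mul.mp hq with h2n | hqd
    · rcases hp.dvd_mul.mp h2n with h2' | hn
      · -- p ∣ 2 contradicts odd prime
        have hna : p.natAbs ∣ 2 := by
          have := Int.natAbs_dvd_natAbs.mpr h2'
          simpa using this
        have hpr := Int.prime_iff_natAbs_prime.mp hp
        have h2eq : p.natAbs = 2 :=
          Nat.le_antisymm (Nat.le_of_dvd (by norm_num) hna) hpr.two_le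
        obtain ⟨k, hk⟩ := hodd
        omega
      · exact hn_to_m hn
    · -- p ∣ m^2 + m*n + n^2
      have hmn2 : p ∣ m * n^2 := by
        have e : m * n^2 = (m - n) * (m^2 + m*n + n^2) - (m^3 - m*n^2 - n^3) := by ring
        rw [e]
        exact dvd_sub (hqd.mul_left _) h2
      rcases hp.dvd_mul.mp hmn2 with hm | hn2
      · have hn : p ∣ n := by
          apply hp.dvd_of_dvd_pow (n := 2)
          have e : n^2 = (m^2 + m*n + n^2) - m * (m + n) := by ring
          rw [e]
          exact dvd_sub hqd (hm.mul_right _)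
        exact hpm hm hn
      · exact hn_to_m (hp.dvd_of_dvd_pow hn2)
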